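/- A measurable function f: ℝ^n → ℝ is componentwise concave and submodular if and only if for all x, y, w, z ∈ ℝ^n with w ≤ x, w ≤ y, x ≤ z, y ≤ z (componentwise) and w + z = x + y, we have f(x) + f(y) ≥ f(w) + f(z). -/

import Mathlib

open Set

/-- `f` is concave in each coordinate, the others being fixed. -/
def ComponentwiseConcave {n : ℕ} (f : (Fin n → ℝ) → ℝ) : Prop :=
  ∀ (x : Fin n → ℝ) (i : Fin n),
    ConcaveOn ℝ Set.univ (fun t : ℝ => f (Function.update x i t))

/-- `f` is submodular (componentwise max/min). -/
def Submodular {n : ℕ} (f : (Fin n → ℝ) → ℝ) : Prop :=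
  ∀ u v : Fin n → ℝ, f (u ⊔ v) + f (u ⊓ v) ≤ f u + f v

section Aux
open MeasureTheory Measure Pointwise


lemma aux_lemA (g : ℝ → ℝ) (hmid : ∀ x y : ℝ, g x + g y ≤ 2 * g ((x + y) / 2))
    (hbdd : ∀ a b : ℝ, ∃ C, ∀ t ∈ Set.Icc a b, C ≤ g t) :
    ConcaveOn ℝ Set.univ g := by
  refine ⟨convex_univ, ?_⟩
  intro x _ y _ a b ha hb hab
  have ha' : a = 1 - b := by linarith
  subst ha'
  obtain ⟨φ, hφ⟩ : ∃ φ : ℝ → ℝ, φ = fun t => g (x + t * (y - x)) - (g x + t * (g y - g x)) :=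
    ⟨_, rfl⟩
  have hφa : ∀ t : ℝ, φ t = g (x + t * (y - x)) - (g x + t * (g y - g x)) := fun t => by
    rw [hφ]
  have hφmid : ∀ s t : ℝ, φ s + φ t ≤ 2 * φ ((s + t) / 2) := by
    intro s t
    have h := hmid (x + s * (y - x)) (x + t * (y - x))
    rw [show (x + s * (y - x) + (x + t * (y - x))) / 2 = x + ((s + t) / 2) * (y - x) by ring] at h
    rw [hφa s, hφa t, hφa ((s + t) / 2)]
    nlinarith [h]
  have hφ0 : φ 0 = 0 := by rw [hφa]; ring_nf
  have hφ1 : φ 1 = 0 := by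
    rw [hφa, show x + 1 * (y - x) = y by ring]; ring
  obtain ⟨C, hC⟩ := hbdd (min x y) (max x y)
  have hφlb : ∀ t ∈ Icc (0:ℝ) 1, C - max (g x) (g y) ≤ φ t := by
    intro t ht
    have hmem : x + t * (y - x) ∈ Icc (min x y) (max x y) := by
      rcases le_total x y with h | h
      · rw [min_eq_left h, max_eq_right h]
        constructor <;> nlinarith [ht.1, ht.2]
      · rw [min_eq_right h, max_eq_left h]
        constructor <;> nlinarith [ht.1, ht.2]
    have h1 := hC _ hmem
    have h2 : g x + t * (g y - g x) ≤ max (g x) (g y) := by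
      have := le_max_left (g x) (g y)
      have := le_max_right (g x) (g y)
      nlinarith [ht.1, ht.2]
    rw [hφa]; linarith
  have hne : (φ '' Icc 0 1).Nonempty := ⟨φ 0, 0, by norm_num, rfl⟩
  have hbb : BddBelow (φ '' Icc 0 1) := by
    refine ⟨C - max (g x) (g y), ?_⟩
    rintro _ ⟨t, ht, rfl⟩; exact hφlb t ht
  have key : ∀ t ∈ Icc (0:ℝ) 1, sInf (φ '' Icc 0 1) / 2 ≤ φ t := by
    intro t ht
    rcases le_total t (1/2) with h | h
    · have h2t : (2 * t) ∈ Icc (0:ℝ) 1 := ⟨by linarith [ht.1], by linarith⟩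
      have hmid2 := hφmid 0 (2 * t)
      rw [show ((0:ℝ) + 2 * t) / 2 = t by ring] at hmid2
      have hml : sInf (φ '' Icc 0 1) ≤ φ (2 * t) := csInf_le hbb ⟨_, h2t, rfl⟩
      linarith
    · have h2t : (2 * t - 1) ∈ Icc (0:ℝ) 1 := ⟨by linarith, by linarith [ht.2]⟩
      have hmid2 := hφmid 1 (2 * t - 1)
      rw [show ((1:ℝ) + (2 * t - 1)) / 2 = t by ring] at hmid2
      have hml : sInf (φ '' Icc 0 1) ≤ φ (2 * t - 1) := csInf_le hbb ⟨_, h2t, rfl⟩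
      linarith
  have hm0 : 0 ≤ sInf (φ '' Icc 0 1) := by
    have : sInf (φ '' Icc 0 1) / 2 ≤ sInf (φ '' Icc 0 1) :=
      le_csInf hne (by rintro _ ⟨t, ht, rfl⟩; exact key t ht)
    linarith
  have hfin : 0 ≤ φ b := le_trans (by linarith) (key b ⟨hb, by linarith⟩)
  rw [hφa] at hfin
  simp only [smul_eq_mul]
  rw [show (1 - b) * x + b * y = x + b * (y - x) by ring]
  nlinarith [hfin]


lemma aux_lemB (g : ℝ → ℝ) (hg : Measurable g)
    (hmid : ∀ x y : ℝ, g x + g y ≤ 2 * g ((x + y) / 2)) :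
    ∃ c δ m : ℝ, 0 < δ ∧ ∀ t : ℝ, |t - c| < δ → m ≤ g t := by
  -- Step 1: a sublevel set of positive measure
  obtain ⟨k, hk⟩ : ∃ k : ℕ, 0 < volume (Icc (0:ℝ) 1 ∩ g ⁻¹' Ici (-(k:ℝ))) := by
    by_contra h
    push_neg at h
    have h0 : ∀ k : ℕ, volume (Icc (0:ℝ) 1 ∩ g ⁻¹' Ici (-(k:ℝ))) = 0 :=
      fun k => le_antisymm (h k) (by simp)
    have hU : (⋃ k : ℕ, Icc (0:ℝ) 1 ∩ g ⁻¹' Ici (-(k:ℝ))) = Icc (0:ℝ) 1 := by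
      ext x
      simp only [mem_iUnion, mem_inter_iff, mem_preimage, mem_Ici]
      constructor
      · rintro ⟨k, hx, -⟩; exact hx
      · intro hx
        obtain ⟨k, hk⟩ := exists_nat_ge (-g x)
        exact ⟨k, hx, by linarith⟩
    have := measure_iUnion_null h0
    rw [hU, Real.volume_Icc] at this
    simp at this
  set A : Set ℝ := Icc (0:ℝ) 1 ∩ g ⁻¹' Ici (-(k:ℝ)) with hA
  have hAm : MeasurableSet A := measurableSet_Icc.inter (hg measurableSet_Ici)
  have hAg : ∀ x ∈ A, -(k:ℝ) ≤ g x := fun x hx => hx.2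
  -- Step 2: Fubini to find r with A ∩ (r - A) of positive measure
  obtain ⟨r, hr⟩ : ∃ r : ℝ, 0 < volume (A ∩ (fun x => r - x) ⁻¹' A) := by
    by_contra h
    push_neg at h
    have h0 : ∀ r : ℝ, volume (A ∩ (fun x => r - x) ⁻¹' A) = 0 :=
      fun r => le_antisymm (h r) (by simp)
    have hBm : ∀ r : ℝ, MeasurableSet ((fun x : ℝ => r - x) ⁻¹' A) :=
      fun r => (measurable_const.sub measurable_id) hAm
    have e1 : ∀ r : ℝ, (∫⁻ x, A.indicator (fun _ => (1:ENNReal)) x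
        * A.indicator (fun _ => (1:ENNReal)) (r - x)) = volume (A ∩ (fun x => r - x) ⁻¹' A) := by
      intro r
      have hpt : ∀ x : ℝ, A.indicator (fun _ => (1:ENNReal)) x
          * A.indicator (fun _ => (1:ENNReal)) (r - x)
          = (A ∩ (fun x => r - x) ⁻¹' A).indicator (fun _ => (1:ENNReal)) x := by
        intro x
        by_cases h1 : x ∈ A <;> by_cases h2 : r - x ∈ A <;>
          simp [Set.indicator_apply, h1, h2, Set.mem_preimage]
      simp_rw [hpt]
      exact lintegral_indicator_one (hAm.inter (hBm r))
    have hmeas : AEMeasurable (Function.uncurry fun (r x : ℝ) =>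
        A.indicator (fun _ => (1:ENNReal)) x * A.indicator (fun _ => (1:ENNReal)) (r - x))
        (volume.prod volume) := by
      apply Measurable.aemeasurable
      apply Measurable.mul
      · exact (measurable_const.indicator hAm).comp measurable_snd
      · exact (measurable_const.indicator hAm).comp (measurable_fst.sub measurable_snd)
    have hswap := lintegral_lintegral_swap hmeas
    have hL : (∫⁻ r : ℝ, ∫⁻ x : ℝ, A.indicator (fun _ => (1:ENNReal)) x
        * A.indicator (fun _ => (1:ENNReal)) (r - x)) = 0 := by
      simp_rw [e1, h0, lintegral_zero]
    have hR : (∫⁻ x : ℝ, ∫⁻ r : ℝ, A.indicator (fun _ => (1:ENNReal)) x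
        * A.indicator (fun _ => (1:ENNReal)) (r - x)) = volume A * volume A := by
      have inner : ∀ x : ℝ, (∫⁻ r : ℝ, A.indicator (fun _ => (1:ENNReal)) x
          * A.indicator (fun _ => (1:ENNReal)) (r - x)) = A.indicator (fun _ => (1:ENNReal)) x * volume A := by
        intro x
        have hfm : Measurable fun r : ℝ => A.indicator (fun _ => (1:ENNReal)) (r - x) :=
          (measurable_const.indicator hAm).comp (measurable_sub_const x)
        rw [lintegral_const_mul _ hfm]
        congr 1
        rw [lintegral_sub_right_eq_self (A.indicator fun _ => (1:ENNReal)) x]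
        exact lintegral_indicator_one hAm
      simp_rw [inner]
      have hone : (∫⁻ a : ℝ, A.indicator (fun _ => (1:ENNReal)) a) = volume A :=
        lintegral_indicator_one hAm
      rw [lintegral_mul_const _ (measurable_const.indicator hAm), hone]
    rw [hL] at hswap
    rw [hR] at hswap
    exact (ENNReal.mul_pos hk.ne' hk.ne').ne' hswap.symm
  -- Step 3: Steinhaus
  set B : Set ℝ := A ∩ (fun x => r - x) ⁻¹' A with hB
  have hBm : MeasurableSet B := hAm.inter ((measurable_const.sub measurable_id) hAm)
  have hS : B - B ∈ nhds (0:ℝ) := sub_mem_nhds_zero_of_addHaar_pos volume B hBm hr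
  obtain ⟨δ, hδ, hball⟩ := Metric.mem_nhds_iff.mp hS
  refine ⟨r / 2, δ / 2, -(k:ℝ), by linarith, ?_⟩
  intro t ht
  have hu : (2 * t - r) ∈ Metric.ball (0:ℝ) δ := by
    rw [Metric.mem_ball, Real.dist_eq]
    rw [show 2 * t - r - 0 = 2 * (t - r / 2) by ring, abs_mul]
    rw [abs_two]
    linarith [ht]
  obtain ⟨p, hp, q, hq, hpq⟩ := hball hu
  have hp1 : p ∈ A := hp.1
  have hq2 : r - q ∈ A := hq.2
  have h1 := hAg p hp1
  have h2 := hAg _ hq2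
  have h3 := hmid p (r - q)
  rw [show (p + (r - q)) / 2 = t by
    have : p - q = 2 * t - r := hpq
    linarith] at h3
  linarith


lemma aux_lemC (g : ℝ → ℝ) (hmid : ∀ x y : ℝ, g x + g y ≤ 2 * g ((x + y) / 2))
    (c δ m : ℝ) (hδ : 0 < δ) (hball : ∀ t : ℝ, |t - c| < δ → m ≤ g t) :
    ∀ a b : ℝ, ∃ C, ∀ t ∈ Set.Icc a b, C ≤ g t := by
  have hloc : ∀ p t : ℝ, |t - p| < δ / 2 → (g (2 * p - c) + m) / 2 ≤ g t := by
    intro p t ht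
    have hy : |(2 * t - (2 * p - c)) - c| < δ := by
      rw [show 2 * t - (2 * p - c) - c = 2 * (t - p) by ring, abs_mul, abs_two]
      linarith
    have h1 := hball _ hy
    have h2 := hmid (2 * p - c) (2 * t - (2 * p - c))
    rw [show (2 * p - c + (2 * t - (2 * p - c))) / 2 = t by ring] at h2
    linarith
  intro a b
  have hcover : Icc a b ⊆ ⋃ p : ℝ, Metric.ball p (δ / 2) := by
    intro t _
    exact mem_iUnion.mpr ⟨t, Metric.mem_ball_self (by linarith)⟩
  obtain ⟨s, hs⟩ := isCompact_Icc.elim_finite_subcover (fun p : ℝ => Metric.ball p (δ / 2))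
    (fun p => Metric.isOpen_ball) hcover
  rcases s.eq_empty_or_nonempty with rfl | hne
  · refine ⟨0, fun t ht => ?_⟩
    have := hs ht
    simp at this
  · refine ⟨s.inf' hne (fun p => (g (2 * p - c) + m) / 2), fun t ht => ?_⟩
    obtain ⟨p, hps, hpt⟩ := by simpa using hs ht
    refine le_trans (Finset.inf'_le _ hps) (hloc p t ?_)
    rw [Real.dist_eq] at hpt
    exact hpt


/-- Three-point concavity. -/
lemma aux_key3 (g : ℝ → ℝ) (hg : ConcaveOn ℝ Set.univ g) (u v w : ℝ) (huv : u ≤ v) (hvw : v ≤ w) :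
    (w - v) * g u + (v - u) * g w ≤ (w - u) * g v := by
  rcases eq_or_lt_of_le (le_trans huv hvw) with h | h
  · have h1 : v = u := le_antisymm (h ▸ hvw) huv
    subst h1; rw [← h]; ring_nf; norm_num
  · have hc : (0:ℝ) < w - u := by linarith
    have hp : 0 ≤ (w - v) / (w - u) := div_nonneg (by linarith) hc.le
    have hq : 0 ≤ (v - u) / (w - u) := div_nonneg (by linarith) hc.le
    have hpq : (w - v) / (w - u) + (v - u) / (w - u) = 1 := by field_simp; ring
    have h := hg.2 (mem_univ u) (mem_univ w) hp hq hpq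
    simp only [smul_eq_mul] at h
    rw [show (w - v) / (w - u) * u + (v - u) / (w - u) * w = v by field_simp; ring] at h
    have h' := mul_le_mul_of_nonneg_left h hc.le
    rw [show (w - u) * ((w - v) / (w - u) * g u + (v - u) / (w - u) * g w)
        = (w - v) * g u + (v - u) * g w by field_simp] at h'
    exact h'

lemma aux_concave_incr (g : ℝ → ℝ) (hg : ConcaveOn ℝ Set.univ g) (t a b : ℝ)
    (ha : 0 ≤ a) (hb : 0 ≤ b) : g (t + a + b) + g t ≤ g (t + a) + g (t + b) := by
  rcases eq_or_lt_of_le (add_nonneg ha hb) with h | h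
  · have ha0 : a = 0 := by linarith
    have hb0 : b = 0 := by linarith
    subst ha0; subst hb0; simp
  · have h1 := aux_key3 g hg t (t + a) (t + a + b) (by linarith) (by linarith)
    have h2 := aux_key3 g hg t (t + b) (t + a + b) (by linarith) (by linarith)
    have h1' : b * g t + a * g (t + a + b) ≤ (a + b) * g (t + a) := by
      have e1 : t + a + b - (t + a) = b := by ring
      have e2 : t + a - t = a := by ring
      have e3 : t + a + b - t = a + b := by ring
      rw [e1, e2, e3] at h1; exact h1
    have h2' : a * g t + b * g (t + a + b) ≤ (a + b) * g (t + b) := by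
      have e1 : t + a + b - (t + b) = a := by ring
      have e2 : t + b - t = b := by ring
      have e3 : t + a + b - t = a + b := by ring
      rw [e1, e2, e3] at h2; exact h2
    have hsum : (a + b) * (g t + g (t + a + b)) ≤ (a + b) * (g (t + a) + g (t + b)) := by
      nlinarith [h1', h2']
    have := le_of_mul_le_mul_left (by linarith [hsum] : (a + b) * (g t + g (t + a + b)) ≤ (a + b) * (g (t + a) + g (t + b))) h
    linarith

lemma aux_concaveOn_of_measurable_midpoint (g : ℝ → ℝ) (hg : Measurable g)
    (hmid : ∀ x y : ℝ, g x + g y ≤ 2 * g ((x + y) / 2)) : ConcaveOn ℝ Set.univ g := by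
  obtain ⟨c, δ, m, hδ, hball⟩ := aux_lemB g hg hmid
  exact aux_lemA g hmid (aux_lemC g hmid c δ m hδ hball)

lemma aux_star {n : ℕ} (f : (Fin n → ℝ) → ℝ) (hcc : ComponentwiseConcave f) (hsm : Submodular f)
    (b : Fin n → ℝ) (i j : Fin n) (s t : ℝ) (hs : 0 ≤ s) (ht : 0 ≤ t) :
    f (b + Pi.single i s + Pi.single j t) + f b ≤ f (b + Pi.single i s) + f (b + Pi.single j t) := by
  by_cases hij : j = i
  · subst hij
    have hupd : ∀ u : ℝ, b + Pi.single j u = Function.update b j (b j + u) := by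
      intro u; funext j'
      by_cases h : j' = j
      · subst h; simp
      · simp [Function.update_apply, Pi.single_apply, h]
    have hsingle : b + Pi.single j s + Pi.single j t = Function.update b j (b j + s + t) := by
      rw [add_assoc, ← Pi.single_add, hupd, ← add_assoc]
    have hg := hcc b j
    have h := aux_concave_incr _ hg (b j) s t hs ht
    rw [Function.update_eq_self] at h
    rw [hsingle, hupd s, hupd t]
    exact h
  · have h1 : (b + Pi.single i s) ⊔ (b + Pi.single j t) = b + Pi.single i s + Pi.single j t := by
      funext j'
      simp only [Pi.sup_apply, Pi.add_apply, Pi.single_apply]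
      by_cases h1 : j' = i
      · have h2 : ¬ j' = j := fun hh => hij (hh ▸ h1)
        rw [if_pos h1, if_neg h2, add_zero, add_zero]
        exact max_eq_left (by linarith)
      · by_cases h2 : j' = j
        · rw [if_neg h1, if_pos h2, add_zero]
          exact max_eq_right (by linarith)
        · rw [if_neg h1, if_neg h2]
          simp
    have h2 : (b + Pi.single i s) ⊓ (b + Pi.single j t) = b := by
      funext j'
      simp only [Pi.inf_apply, Pi.add_apply, Pi.single_apply]
      by_cases h1 : j' = i
      · have h2 : ¬ j' = j := fun hh => hij (hh ▸ h1)
        rw [if_pos h1, if_neg h2, add_zero]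
        exact min_eq_right (by linarith)
      · by_cases h2 : j' = j
        · rw [if_neg h1, if_pos h2, add_zero]
          exact min_eq_left (by linarith)
        · rw [if_neg h1, if_neg h2]; simp
    have h := hsm (b + Pi.single i s) (b + Pi.single j t)
    rw [h1, h2] at h
    linarith

def aux_res {n : ℕ} (e : Fin n → ℝ) (T : Finset (Fin n)) : Fin n → ℝ :=
  fun j => if j ∈ T then e j else 0

lemma aux_res_empty {n : ℕ} (e : Fin n → ℝ) : aux_res e ∅ = 0 := by
  funext j; simp [aux_res]

lemma aux_res_univ {n : ℕ} (e : Fin n → ℝ) : aux_res e Finset.univ = e := by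
  funext j; simp [aux_res]

lemma aux_res_insert {n : ℕ} (e : Fin n → ℝ) {j : Fin n} {T : Finset (Fin n)} (hj : j ∉ T) :
    aux_res e (insert j T) = aux_res e T + Pi.single j (e j) := by
  funext j'
  by_cases h : j' = j
  · subst h; simp [aux_res, hj]
  · simp [aux_res, Finset.mem_insert, h, Pi.single_apply]

lemma aux_starV {n : ℕ} (f : (Fin n → ℝ) → ℝ) (hcc : ComponentwiseConcave f) (hsm : Submodular f)
    (i : Fin n) (s : ℝ) (hs : 0 ≤ s) (e : Fin n → ℝ) (he : 0 ≤ e) (b : Fin n → ℝ) :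
    f (b + e + Pi.single i s) + f b ≤ f (b + Pi.single i s) + f (b + e) := by
  suffices h : ∀ T : Finset (Fin n), ∀ b : Fin n → ℝ,
      f (b + aux_res e T + Pi.single i s) + f b
        ≤ f (b + Pi.single i s) + f (b + aux_res e T) by
    have := h Finset.univ b
    rwa [aux_res_univ] at this
  intro T
  induction T using Finset.induction_on with
  | empty => intro b; rw [aux_res_empty, add_zero]
  | @insert j T hj ih =>
    intro b
    rw [aux_res_insert e hj]
    have h1 := ih b
    have h2 := aux_star f hcc hsm (b + aux_res e T) i j s (e j) hs (by simpa using he j)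
    rw [show b + (aux_res e T + Pi.single j (e j)) + Pi.single i s
        = b + aux_res e T + Pi.single i s + Pi.single j (e j) by abel,
      show b + (aux_res e T + Pi.single j (e j)) = b + aux_res e T + Pi.single j (e j) by abel]
    linarith
lemma aux_dd {n : ℕ} (f : (Fin n → ℝ) → ℝ) (hcc : ComponentwiseConcave f) (hsm : Submodular f)
    (e : Fin n → ℝ) (he : 0 ≤ e) (d : Fin n → ℝ) (hd : 0 ≤ d) (b : Fin n → ℝ) :
    f (b + e + d) + f b ≤ f (b + d) + f (b + e) := by
  suffices h : ∀ T : Finset (Fin n), ∀ b : Fin n → ℝ,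
      f (b + e + aux_res d T) + f b ≤ f (b + aux_res d T) + f (b + e) by
    have := h Finset.univ b
    rwa [aux_res_univ] at this
  intro T
  induction T using Finset.induction_on with
  | empty => intro b; rw [aux_res_empty, add_zero, add_zero]; linarith
  | @insert j T hj ih =>
    intro b
    rw [aux_res_insert d hj]
    have h1 := ih b
    have h2 := aux_starV f hcc hsm j (d j) (by simpa using hd j) e he (b + aux_res d T)
    rw [show b + e + (aux_res d T + Pi.single j (d j))
        = b + e + aux_res d T + Pi.single j (d j) by abel,
      show b + (aux_res d T + Pi.single j (d j)) = b + aux_res d T + Pi.single j (d j) by abel]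
    rw [show b + aux_res d T + e = b + e + aux_res d T by abel] at h2
    linarith

end Aux

theorem componentwiseConcave_submodular_iff {n : ℕ} (f : (Fin n → ℝ) → ℝ)
    (hf : Measurable f) :
    (ComponentwiseConcave f ∧ Submodular f) ↔
      (∀ x y w z : Fin n → ℝ, w ≤ x → w ≤ y → x ≤ z → y ≤ z → w + z = x + y →
        f w + f z ≤ f x + f y) := by
  constructor
  · rintro ⟨hcc, hsm⟩ x y w z hwx hwy hxz hyz hsum
    have hd : 0 ≤ x - w := sub_nonneg.mpr hwx
    have he : 0 ≤ y - w := sub_nonneg.mpr hwy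
    have key := aux_dd f hcc hsm (y - w) he (x - w) hd w
    have hz : w + (y - w) + (x - w) = z := by
      have hz' : z = x + y - w := by rw [← hsum]; abel
      rw [hz']; abel
    rw [hz, show w + (x - w) = x by abel, show w + (y - w) = y by abel] at key
    linarith
  · intro H
    constructor
    · intro x i
      apply aux_concaveOn_of_measurable_midpoint
      · exact hf.comp (measurable_update x)
      · intro s t
        have hmin : min s t ≤ (s + t) / 2 := by
          rcases le_total s t with h | h
          · rw [min_eq_left h]; linarith
          · rw [min_eq_right h]; linarith
        have hmax : (s + t) / 2 ≤ max s t := by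
          rcases le_total s t with h | h
          · rw [max_eq_right h]; linarith
          · rw [max_eq_left h]; linarith
        have hw1 : Function.update x i (min s t) ≤ Function.update x i ((s + t) / 2) := by
          intro j
          rcases eq_or_ne j i with rfl | h
          · simpa using hmin
          · simp [Function.update_apply, h]
        have hx1 : Function.update x i ((s + t) / 2) ≤ Function.update x i (max s t) := by
          intro j
          rcases eq_or_ne j i with rfl | h
          · simpa using hmax
          · simp [Function.update_apply, h]
        have hsumEq : Function.update x i (min s t) + Function.update x i (max s t)
            = Function.update x i ((s + t) / 2) + Function.update x i ((s + t) / 2) := by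
          funext j
          rcases eq_or_ne j i with rfl | h
          · simp [min_add_max]
          · simp [Function.update_apply, h]
        have hH := H (Function.update x i ((s + t) / 2)) (Function.update x i ((s + t) / 2))
          (Function.update x i (min s t)) (Function.update x i (max s t)) hw1 hw1 hx1 hx1 hsumEq
        have hms : f (Function.update x i (min s t)) + f (Function.update x i (max s t))
            = f (Function.update x i s) + f (Function.update x i t) := by
          rcases le_total s t with h | h
          · rw [min_eq_left h, max_eq_right h]
          · rw [min_eq_right h, max_eq_left h]; ring
        show f (Function.update x i s) + f (Function.update x i t)
            ≤ 2 * f (Function.update x i ((s + t) / 2))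
        linarith
    · intro u v
      have hsum2 : (u ⊓ v) + (u ⊔ v) = u + v := by
        funext j
        simp only [Pi.add_apply, Pi.inf_apply, Pi.sup_apply]
        exact min_add_max _ _
      have := H u v (u ⊓ v) (u ⊔ v) inf_le_left inf_le_right le_sup_left le_sup_right hsum2
      linarith
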